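/- arXiv:2011.01017 — 3 statements merged into one kernel-verified Lean document; each statement's English description precedes it below -/
import Mathlib

section
/- For every real ε with 0 < ε < 1/4 and every natural number k ≥ 10/ε⁴, there exists a real δ such that (1) ε²/2 ≤ δ ≤ ε², (2) δ = i/k for some positive integer i, and (3) ⌈1/δ⌉·δ − 1 ≤ δ/2 (i.e., rounding 1 up to the nearest multiple of δ exceeds 1 by at most δ/2). -/
set_option maxHeartbeats 1600000 in
theorem stmt_0 (ε : ℝ) (hε0 : 0 < ε) (hε : ε < 1/4) (k : ℕ) (hk : 10 / ε^4 ≤ (k : ℝ)) :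
    ∃ δ : ℝ, ε^2 / 2 ≤ δ ∧ δ ≤ ε^2 ∧ (∃ i : ℕ, 0 < i ∧ δ = (i : ℝ) / k) ∧
      (⌈1/δ⌉ : ℝ) * δ - 1 ≤ δ / 2 := by
  have hε4 : (0:ℝ) < ε^4 := by positivity
  have hε2 : (0:ℝ) < ε^2 := by positivity
  have hε2lt : ε^2 < 1/16 := by nlinarith
  have hk0 : (0:ℝ) < k := lt_of_lt_of_le (by positivity) hk
  have hk' : 10 ≤ (k:ℝ) * ε^4 := by
    rw [div_le_iff₀ hε4] at hk
    linarith
  have h1k : 1/(k:ℝ) ≤ ε^4/10 := by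
    rw [div_le_div_iff₀ hk0 (by norm_num)]
    linarith
  have h1k160 : 1/(k:ℝ) ≤ ε^2/160 := by nlinarith
  set a : ℝ := ε^2 - 1/k with ha_def
  have ha : 0 < a := by
    have h : ε^4/10 < ε^2 := by nlinarith
    simp only [ha_def]; linarith
  set m : ℕ := ⌈1/a⌉₊ with hm_def
  have hm1 : 1/a ≤ (m:ℝ) := Nat.le_ceil _
  have hm2 : (m:ℝ) < 1/a + 1 := Nat.ceil_lt_add_one (by positivity)
  have hm16 : (16:ℝ) ≤ m := by
    have h1a : (16:ℝ) ≤ 1/a := by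
      rw [le_div_iff₀ ha]
      have hk1pos : (0:ℝ) < 1/k := by positivity
      simp only [ha_def]
      nlinarith
    linarith
  have hm0 : (0:ℝ) < m := by linarith
  have hma : 1/(m:ℝ) ≤ a := by
    rw [div_le_iff₀ hm0]
    have h := mul_le_mul_of_nonneg_left hm1 ha.le
    rw [mul_one_div, div_self (ne_of_gt ha)] at h
    linarith
  have h3 : ((m:ℝ) - 1) * a < 1 := (lt_div_iff₀ ha).mp (by linarith)
  have hmub : (m:ℝ) * ε^2 ≤ 2 := by
    have hmk : (m:ℝ) * (1/k) ≤ (m:ℝ) * (ε^2/160) :=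
      mul_le_mul_of_nonneg_left h1k160 hm0.le
    have hk1pos : (0:ℝ) < 1/k := by positivity
    have h3' : ((m:ℝ) - 1) * (ε^2 - 1/k) < 1 := by rw [ha_def] at h3; exact h3
    nlinarith [h3', hmk]
  have hkm2 : 2 * (m:ℝ)^2 ≤ k := by
    have hsq : ((m:ℝ)*ε^2)^2 ≤ 4 := by nlinarith [hmub, mul_pos hm0 hε2]
    nlinarith [hsq, hk', hε4]
  set i : ℕ := ⌈(k:ℝ)/m⌉₊ with hi_def
  have hi0 : 0 < i := Nat.ceil_pos.mpr (div_pos hk0 hm0)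
  have hi1 : (k:ℝ)/m ≤ (i:ℝ) := Nat.le_ceil _
  have hi2 : (i:ℝ) < (k:ℝ)/m + 1 := Nat.ceil_lt_add_one (div_pos hk0 hm0).le
  set δ : ℝ := (i:ℝ)/k with hδ_def
  have hδlb : 1/(m:ℝ) ≤ δ := by
    rw [hδ_def, div_le_div_iff₀ hm0 hk0]
    rw [div_le_iff₀ hm0] at hi1
    linarith
  have hδub : δ ≤ 1/(m:ℝ) + 1/k := by
    rw [hδ_def, div_le_iff₀ hk0]
    have h4 : (1/(m:ℝ) + 1/k) * k = (k:ℝ)/m + 1 := by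
      field_simp
    rw [h4]
    linarith
  have hδpos : 0 < δ := div_pos (by exact_mod_cast hi0) hk0
  clear_value a m i δ
  refine ⟨δ, ?_, ?_, ⟨i, hi0, hδ_def⟩, ?_⟩
  · -- ε^2/2 ≤ δ
    have : ε^2/2 ≤ 1/(m:ℝ) := by
      rw [div_le_div_iff₀ (by norm_num) hm0]
      linarith
    linarith
  · -- δ ≤ ε^2
    have : 1/(m:ℝ) + 1/k ≤ ε^2 := by
      simp only [ha_def] at hma
      linarith
    linarith
  · -- ceiling condition
    have hc : (⌈1/δ⌉ : ℝ) ≤ (m:ℝ) := by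
      have h1δ : 1/δ ≤ (m:ℝ) := by
        rw [div_le_iff₀ hδpos]
        rw [div_le_iff₀ hm0] at hδlb
        linarith [mul_le_mul_of_nonneg_left hδlb hm0.le]
      have h5 : 1/δ ≤ (m:ℝ) := h1δ
      have h6 : ⌈1/δ⌉ ≤ (m:ℤ) := Int.ceil_le.mpr (by exact_mod_cast h5)
      exact_mod_cast h6
    have h7 : (⌈1/δ⌉ : ℝ) * δ ≤ (m:ℝ) * δ :=
      mul_le_mul_of_nonneg_right hc hδpos.le
    have h8 : (m:ℝ) * δ ≤ (m:ℝ) * (1/(m:ℝ) + 1/k) :=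
      mul_le_mul_of_nonneg_left hδub hm0.le
    have h9 : (m:ℝ) * (1/(m:ℝ) + 1/k) = 1 + (m:ℝ)/k := by
      field_simp
    have h10 : (m:ℝ)/k ≤ 1/(2*(m:ℝ)) := by
      rw [div_le_div_iff₀ hk0 (by linarith : (0:ℝ) < 2*(m:ℝ))]
      nlinarith
    have h11 : 1/(2*(m:ℝ)) ≤ δ/2 := by
      rw [div_le_div_iff₀ (by linarith : (0:ℝ) < 2*(m:ℝ)) (by norm_num : (0:ℝ) < 2)]
      rw [div_le_iff₀ hm0] at hδlb
      linarith
    linarith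
end

section
/- Let a : ℕ → ℝ be a sequence of positive reals, each a multiple of 1/k for a positive integer k, and let A_i = a_1 + ... + a_i. If A_t ≤ 1, then the sum over i = 1 to t of a_i / A_i is at most the harmonic sum H_{k} = ∑_{j=1}^{k} 1/j, and in particular is O(log k). -/
lemma harm_aux (c : ℕ → ℕ) (hc : ∀ i, 0 < c i) (t : ℕ) :
    ∑ i ∈ Finset.Icc 1 t, (c i : ℝ) / (∑ j ∈ Finset.Icc 1 i, c j : ℕ) ≤
    ∑ j ∈ Finset.Icc 1 (∑ j ∈ Finset.Icc 1 t, c j), (1 : ℝ) / j := by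
  induction t with
  | zero => simp
  | succ n ih =>
    have h1 : (1:ℕ) ≤ n + 1 := by omega
    rw [Finset.sum_Icc_succ_top h1]
    set Sn := ∑ j ∈ Finset.Icc 1 n, c j with hSn
    have hSt : ∑ j ∈ Finset.Icc 1 (n+1), c j = Sn + c (n+1) := by
      rw [Finset.sum_Icc_succ_top h1]
    rw [hSt]
    have hIcc : ∀ m : ℕ, Finset.Icc 1 m = Finset.Ioc 0 m := by
      intro m; rfl
    have hsplit : ∑ j ∈ Finset.Icc 1 (Sn + c (n+1)), (1:ℝ)/j
        = (∑ j ∈ Finset.Icc 1 Sn, (1:ℝ)/j) + ∑ j ∈ Finset.Ioc Sn (Sn + c (n+1)), (1:ℝ)/j := by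
      rw [hIcc, hIcc, Finset.sum_Ioc_consecutive _ (Nat.zero_le _) (Nat.le_add_right _ _)]
    rw [hsplit]
    have hStpos : (0:ℝ) < (Sn + c (n+1) : ℕ) := by
      have := hc (n+1); exact_mod_cast by omega
    have hstep : (c (n+1) : ℝ) / (Sn + c (n+1) : ℕ) ≤
        ∑ j ∈ Finset.Ioc Sn (Sn + c (n+1)), (1:ℝ)/j := by
      have hcard : (Finset.Ioc Sn (Sn + c (n+1))).card = c (n+1) := by
        rw [Nat.card_Ioc]; omega
      have hbound : ∀ j ∈ Finset.Ioc Sn (Sn + c (n+1)), (1:ℝ)/(Sn + c (n+1) : ℕ) ≤ 1/j := by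
        intro j hj
        rw [Finset.mem_Ioc] at hj
        have hjpos : (0:ℝ) < j := by exact_mod_cast by omega
        apply one_div_le_one_div_of_le hjpos
        exact_mod_cast hj.2
      calc (c (n+1) : ℝ) / (Sn + c (n+1) : ℕ)
          = (Finset.Ioc Sn (Sn + c (n+1))).card • ((1:ℝ)/(Sn + c (n+1) : ℕ)) := by
            rw [hcard, nsmul_eq_mul]; ring
        _ ≤ ∑ j ∈ Finset.Ioc Sn (Sn + c (n+1)), (1:ℝ)/j :=
            Finset.card_nsmul_le_sum _ _ _ hbound
    linarith [ih]

theorem stmt_1 (k : ℕ) (hk : 0 < k) (a : ℕ → ℝ)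
    (ha : ∀ i, ∃ c : ℕ, 0 < c ∧ a i = (c : ℝ) / k)
    (A : ℕ → ℝ) (hA : ∀ i, A i = ∑ j ∈ Finset.Icc 1 i, a j)
    (t : ℕ) (ht : A t ≤ 1) :
    ∑ i ∈ Finset.Icc 1 t, a i / A i ≤ ∑ j ∈ Finset.Icc 1 k, (1 : ℝ) / j := by
  choose c hc hac using ha
  have hkpos : (0:ℝ) < k := by exact_mod_cast hk
  have hAS : ∀ i, A i = ((∑ j ∈ Finset.Icc 1 i, c j : ℕ) : ℝ) / k := by
    intro i
    rw [hA, Nat.cast_sum, Finset.sum_div]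
    exact Finset.sum_congr rfl fun j _ => hac j
  -- rewrite LHS
  have hLHS : ∑ i ∈ Finset.Icc 1 t, a i / A i
      = ∑ i ∈ Finset.Icc 1 t, (c i : ℝ) / (∑ j ∈ Finset.Icc 1 i, c j : ℕ) := by
    apply Finset.sum_congr rfl
    intro i hi
    rw [Finset.mem_Icc] at hi
    have hSpos : 0 < ∑ j ∈ Finset.Icc 1 i, c j :=
      Finset.sum_pos (fun j _ => hc j) ⟨1, Finset.mem_Icc.mpr ⟨le_refl 1, hi.1⟩⟩
    have hSpos' : (0:ℝ) < (∑ j ∈ Finset.Icc 1 i, c j : ℕ) := by exact_mod_cast hSpos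
    rw [hac i, hAS i]
    field_simp
  rw [hLHS]
  have hSt : (∑ j ∈ Finset.Icc 1 t, c j) ≤ k := by
    have := ht
    rw [hAS t] at this
    have : ((∑ j ∈ Finset.Icc 1 t, c j : ℕ) : ℝ) ≤ k := by
      rw [div_le_one hkpos] at this; exact this
    exact_mod_cast this
  calc ∑ i ∈ Finset.Icc 1 t, (c i : ℝ) / (∑ j ∈ Finset.Icc 1 i, c j : ℕ)
      ≤ ∑ j ∈ Finset.Icc 1 (∑ j ∈ Finset.Icc 1 t, c j), (1:ℝ)/j := harm_aux c hc t
    _ ≤ ∑ j ∈ Finset.Icc 1 k, (1:ℝ)/j := by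
        apply Finset.sum_le_sum_of_subset_of_nonneg
        · exact Finset.Icc_subset_Icc_right hSt
        · intro j _ _; positivity
end

section
/- Suppose a real quantity v_s starts at 1 and only decreases over a sequence of commit operations, where the i-th operation decreases v_s by ξ_i ≥ 0. Let δ > 0 satisfy ⌈1⌉_δ − 1 ≤ δ/2 (rounding 1 up to a multiple of δ). Let X be the number of times the value ⌈v_s⌉_δ (v_s rounded up to a multiple of δ) changes during the sequence. If X ≥ 1, then δ·(X − 1) + δ/2 ≤ ∑_i ξ_i. -/
theorem stmt_8 (δ : ℝ) (hδ : 0 < δ) (hround : (⌈1/δ⌉ : ℝ) * δ - 1 ≤ δ / 2)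
    (n : ℕ) (ξ : ℕ → ℝ) (hξ : ∀ i, 0 ≤ ξ i)
    (v : ℕ → ℝ) (hv0 : v 0 = 1) (hv : ∀ i, v (i + 1) = v i - ξ i)
    (X : ℕ)
    (hX : X = ((Finset.range n).filter
      (fun i => (⌈v (i + 1) / δ⌉ : ℝ) * δ ≠ (⌈v i / δ⌉ : ℝ) * δ)).card)
    (hX1 : 1 ≤ X) :
    δ * ((X : ℝ) - 1) + δ / 2 ≤ ∑ i ∈ Finset.range n, ξ i := by
  -- sum equals 1 - v n
  have hsum : ∀ m, ∑ i ∈ Finset.range m, ξ i = 1 - v m := by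
    intro m
    induction m with
    | zero => simp [hv0]
    | succ k ih =>
      rw [Finset.sum_range_succ, ih, hv k]; ring
  -- key inequality on ceilings
  have hkey : ∀ m, ⌈v m / δ⌉ +
      (((Finset.range m).filter
        (fun i => (⌈v (i + 1) / δ⌉ : ℝ) * δ ≠ (⌈v i / δ⌉ : ℝ) * δ)).card : ℤ)
      ≤ ⌈1 / δ⌉ := by
    intro m
    induction m with
    | zero => simp [hv0]
    | succ k ih =>
      have hmono : ⌈v (k + 1) / δ⌉ ≤ ⌈v k / δ⌉ := by
        apply Int.ceil_le_ceil
        have : v (k + 1) ≤ v k := by rw [hv k]; linarith [hξ k]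
        exact div_le_div_of_nonneg_right this hδ.le
      rw [Finset.range_add_one, Finset.filter_insert]
      by_cases hp : (⌈v (k + 1) / δ⌉ : ℝ) * δ ≠ (⌈v k / δ⌉ : ℝ) * δ
      · rw [if_pos hp, Finset.card_insert_of_notMem (by simp)]
        have hne : ⌈v (k + 1) / δ⌉ ≠ ⌈v k / δ⌉ := by
          intro h; exact hp (by rw [h])
        have : ⌈v (k + 1) / δ⌉ + 1 ≤ ⌈v k / δ⌉ :=
          Int.lt_iff_add_one_le.mp (lt_of_le_of_ne hmono hne)
        push_cast
        push_cast at ih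
        linarith
      · rw [if_neg hp]
        linarith
  have hX' : ⌈v n / δ⌉ + (X : ℤ) ≤ ⌈1 / δ⌉ := by rw [hX]; exact hkey n
  have hvn : v n ≤ (⌈v n / δ⌉ : ℝ) * δ := by
    have := Int.le_ceil (v n / δ)
    calc v n = (v n / δ) * δ := by field_simp
      _ ≤ (⌈v n / δ⌉ : ℝ) * δ := by nlinarith
  have hC : ((⌈v n / δ⌉ : ℝ)) ≤ (⌈1 / δ⌉ : ℝ) - (X : ℝ) := by
    have h2 : ((⌈v n / δ⌉ : ℤ) : ℝ) + (X : ℝ) ≤ ((⌈1 / δ⌉ : ℤ) : ℝ) := by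
      exact_mod_cast hX'
    linarith
  rw [hsum n]
  have : v n ≤ ((⌈1 / δ⌉ : ℝ) - (X : ℝ)) * δ := by
    calc v n ≤ (⌈v n / δ⌉ : ℝ) * δ := hvn
      _ ≤ ((⌈1 / δ⌉ : ℝ) - (X : ℝ)) * δ := by nlinarith
  have hX1' : (1 : ℝ) ≤ (X : ℝ) := by exact_mod_cast hX1
  nlinarith
end
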